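/- Let t > 0, k ∈ ℝ with cos(2kt) ≠ −1, and define on [0,t): f₁(s) = i cos(2ks) + i (sin(2kt)/(cos(2kt)+1)) sin(2ks) and f₂(s) = i (sin(2kt)/(cos(2kt)+1)) cos(2ks) − i sin(2ks). Then with M f(s) = k(∫₀^s f(τ)dτ − ∫_s^t f(τ)dτ), the pair (f₁,f₂) satisfies −i f₁(s) + i M f₂(s) = 1 and −i M f₁(s) − i f₂(s) = 0 for all s ∈ [0,t). -/
import Mathlib

open MeasureTheory Complex

lemma ofReal_intervalIntegral (f : ℝ → ℝ) (a b : ℝ) :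
    (∫ τ in a..b, ((f τ : ℂ))) = ((∫ τ in a..b, f τ : ℝ) : ℂ) :=
  RCLike.intervalIntegral_ofReal

lemma intCosC (k : ℝ) (hk : (2*k) ≠ 0) (a b : ℝ) :
    (∫ τ in a..b, ((Real.cos (2*k*τ) : ℂ))) =
      (((Real.sin (2*k*b) - Real.sin (2*k*a)) / (2*k) : ℝ) : ℂ) := by
  rw [ofReal_intervalIntegral]
  norm_cast
  rw [intervalIntegral.integral_comp_mul_left Real.cos hk, integral_cos,
    smul_eq_mul]
  field_simp

lemma intSinC (k : ℝ) (hk : (2*k) ≠ 0) (a b : ℝ) :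
    (∫ τ in a..b, ((Real.sin (2*k*τ) : ℂ))) =
      (((Real.cos (2*k*a) - Real.cos (2*k*b)) / (2*k) : ℝ) : ℂ) := by
  rw [ofReal_intervalIntegral]
  norm_cast
  rw [intervalIntegral.integral_comp_mul_left Real.sin hk, integral_sin,
    smul_eq_mul]
  field_simp

set_option maxHeartbeats 1600000 in
/-- The explicit pair `(f₁,f₂)` is the preimage of `(𝟙_{[0,t)}, 0)` under the operator
`N = -i·[[Id, -M],[M, Id]]`: with `Mf(s) = k(∫_0^s f - ∫_s^t f)` one has
`-i f₁(s) + i (M f₂)(s) = 1` and `-i (M f₁)(s) - i f₂(s) = 0` on `[0,t)`. -/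
theorem stmt_7 (t k : ℝ) (ht : 0 < t) (hcos : Real.cos (2*k*t) ≠ -1)
    (f₁ f₂ : ℝ → ℂ)
    (hf₁ : ∀ s, f₁ s = Complex.I * (Real.cos (2*k*s) : ℂ) +
      Complex.I * ((Real.sin (2*k*t) / (Real.cos (2*k*t) + 1) : ℝ) : ℂ) * (Real.sin (2*k*s) : ℂ))
    (hf₂ : ∀ s, f₂ s = Complex.I * ((Real.sin (2*k*t) / (Real.cos (2*k*t) + 1) : ℝ) : ℂ) *
      (Real.cos (2*k*s) : ℂ) - Complex.I * (Real.sin (2*k*s) : ℂ)) :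
    ∀ s ∈ Set.Ico (0:ℝ) t,
      (-Complex.I * f₁ s +
        Complex.I * ((k:ℂ) * ((∫ τ in (0:ℝ)..s, f₂ τ) - ∫ τ in s..t, f₂ τ)) = 1) ∧
      (-Complex.I * ((k:ℂ) * ((∫ τ in (0:ℝ)..s, f₁ τ) - ∫ τ in s..t, f₁ τ)) -
        Complex.I * f₂ s = 0) := by
  intro s hs
  rcases eq_or_ne k 0 with hk | hk
  · subst hk
    simp only [hf₁, hf₂] at *
    norm_num
  · have hk2 : (2*k) ≠ 0 := by simpa using hk
    have hk' : (k : ℂ) ≠ 0 := by exact_mod_cast hk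
    have hne : Real.cos (2*k*t) + 1 ≠ 0 := fun h => hcos (by linarith)
    set c : ℝ := Real.sin (2*k*t) / (Real.cos (2*k*t) + 1) with hc
    have hcont1 : ∀ a b : ℝ, IntervalIntegrable (fun τ : ℝ => ((Real.cos (2*k*τ) : ℂ))) volume a b := by
      intro a b; exact (Complex.continuous_ofReal.comp (by continuity)).intervalIntegrable a b
    have hcont2 : ∀ a b : ℝ, IntervalIntegrable (fun τ : ℝ => ((Real.sin (2*k*τ) : ℂ))) volume a b := by
      intro a b; exact (Complex.continuous_ofReal.comp (by continuity)).intervalIntegrable a b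
    have hI1 : ∀ a b : ℝ, (∫ τ in a..b, f₁ τ) =
        Complex.I * (((Real.sin (2*k*b) - Real.sin (2*k*a))/(2*k) : ℝ) : ℂ) +
        Complex.I * (c : ℂ) * (((Real.cos (2*k*a) - Real.cos (2*k*b))/(2*k) : ℝ) : ℂ) := by
      intro a b
      simp only [hf₁]
      rw [intervalIntegral.integral_add ((hcont1 a b).const_mul _) ((hcont2 a b).const_mul _),
        intervalIntegral.integral_const_mul, intervalIntegral.integral_const_mul,
        intCosC k hk2, intSinC k hk2]
    have hI2 : ∀ a b : ℝ, (∫ τ in a..b, f₂ τ) =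
        Complex.I * (c : ℂ) * (((Real.sin (2*k*b) - Real.sin (2*k*a))/(2*k) : ℝ) : ℂ) -
        Complex.I * (((Real.cos (2*k*a) - Real.cos (2*k*b))/(2*k) : ℝ) : ℂ) := by
      intro a b
      simp only [hf₂]
      rw [intervalIntegral.integral_sub ((hcont1 a b).const_mul _) ((hcont2 a b).const_mul _),
        intervalIntegral.integral_const_mul, intervalIntegral.integral_const_mul,
        intCosC k hk2, intSinC k hk2]
    have hC1 : (c : ℂ) * (Real.sin (2*k*t) : ℂ) = 1 - (Real.cos (2*k*t) : ℂ) := by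
      have h : c * Real.sin (2*k*t) = 1 - Real.cos (2*k*t) := by
        rw [hc, div_mul_eq_mul_div, div_eq_iff hne]
        nlinarith [Real.sin_sq_add_cos_sq (2*k*t)]
      exact_mod_cast h
    have hC2 : (c : ℂ) * ((Real.cos (2*k*t) : ℂ) + 1) = (Real.sin (2*k*t) : ℂ) := by
      have h : c * (Real.cos (2*k*t) + 1) = Real.sin (2*k*t) := by
        rw [hc]; field_simp
      exact_mod_cast h
    have hM1 : (k:ℂ) * ((∫ τ in (0:ℝ)..s, f₁ τ) - ∫ τ in s..t, f₁ τ) =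
        Complex.I * (2*(Real.sin (2*k*s):ℂ) - (Real.sin (2*k*t):ℂ))/2
        + Complex.I * (c:ℂ) * ((1:ℂ) - 2*(Real.cos (2*k*s):ℂ) + (Real.cos (2*k*t):ℂ))/2 := by
      rw [hI1, hI1]
      simp only [mul_zero, Real.sin_zero, Real.cos_zero]
      simp only [Complex.ofReal_div, Complex.ofReal_sub, Complex.ofReal_mul,
        Complex.ofReal_ofNat, Complex.ofReal_one, Complex.ofReal_zero]
      field_simp
      ring
    have hM2 : (k:ℂ) * ((∫ τ in (0:ℝ)..s, f₂ τ) - ∫ τ in s..t, f₂ τ) =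
        Complex.I * (c:ℂ) * (2*(Real.sin (2*k*s):ℂ) - (Real.sin (2*k*t):ℂ))/2
        - Complex.I * ((1:ℂ) - 2*(Real.cos (2*k*s):ℂ) + (Real.cos (2*k*t):ℂ))/2 := by
      rw [hI2, hI2]
      simp only [mul_zero, Real.sin_zero, Real.cos_zero]
      simp only [Complex.ofReal_div, Complex.ofReal_sub, Complex.ofReal_mul,
        Complex.ofReal_ofNat, Complex.ofReal_one, Complex.ofReal_zero]
      field_simp
      ring
    rw [hf₁ s, hf₂ s, hM1, hM2]
    constructor
    · linear_combination
        (-(((Real.cos (2*k*s):ℂ)) + (c:ℂ)*(Real.sin (2*k*s):ℂ))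
          + (1/2)*((c:ℂ)*(2*(Real.sin (2*k*s):ℂ) - (Real.sin (2*k*t):ℂ))
            - 1 + 2*(Real.cos (2*k*s):ℂ) - (Real.cos (2*k*t):ℂ))) * Complex.I_sq
        + (1/2) * hC1
    · linear_combination
        (-((2*(Real.sin (2*k*s):ℂ) - (Real.sin (2*k*t):ℂ))/2
          + (c:ℂ)*((1:ℂ) - 2*(Real.cos (2*k*s):ℂ) + (Real.cos (2*k*t):ℂ))/2
          + (c:ℂ)*(Real.cos (2*k*s):ℂ) - (Real.sin (2*k*s):ℂ))) * Complex.I_sq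
        + (1/2) * hC2
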